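/- Let ν ≥ 1, τ > 0, γ > 0, and let v ∈ ℤ^ν, ℓ ∈ ℤ^ν, and let ω ∈ ℝ^ν satisfy the Diophantine condition |ω·ℓ| ≥ γ(1+|ℓ|)^{-τ}. Suppose j, k are natural numbers with j, k ≥ 1 satisfying the momentum constraint v·ℓ + j - k = 0, and suppose min(j,k) ≥ (|v|₁(1+|ℓ|)^{τ+1}/γ)², where |v|₁ = Σᵢ|vᵢ|. Then |ω·ℓ + √j - √k| ≥ γ/(2(1+|ℓ|)^τ). -/

import Mathlib

open Finset

/-- Second order Melnikov conditions from the Diophantine condition via momentum conservation: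
if `|ω·ℓ| ≥ γ (1+|ℓ|₁)^{-τ}`, `v·ℓ + j - k = 0` and `min j k ≥ (|v|₁ (1+|ℓ|₁)^{τ+1}/γ)²`,
then `|ω·ℓ + √j - √k| ≥ γ/(2 (1+|ℓ|₁)^τ)`. -/
theorem melnikov_from_momentum (ν : ℕ) (hν : 1 ≤ ν) (τ γ : ℝ) (hτ : 0 < τ) (hγ : 0 < γ)
    (v ℓ : Fin ν → ℤ) (ω : Fin ν → ℝ)
    (hdio : γ / (1 + ∑ i, |(ℓ i : ℝ)|) ^ τ ≤ |∑ i, ω i * (ℓ i : ℝ)|)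
    (j k : ℕ) (hj : 1 ≤ j) (hk : 1 ≤ k)
    (hmom : (∑ i, v i * ℓ i) + (j : ℤ) - (k : ℤ) = 0)
    (hbig : ((∑ i, |(v i : ℝ)|) * (1 + ∑ i, |(ℓ i : ℝ)|) ^ (τ + 1) / γ) ^ 2 ≤ (min j k : ℕ)) :
    γ / (2 * (1 + ∑ i, |(ℓ i : ℝ)|) ^ τ) ≤
      |(∑ i, ω i * (ℓ i : ℝ)) + Real.sqrt j - Real.sqrt k| := by
  set L : ℝ := ∑ i, |(ℓ i : ℝ)| with hLdef
  set V : ℝ := ∑ i, |(v i : ℝ)| with hVdef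
  have hL0 : 0 ≤ L := Finset.sum_nonneg fun i _ => abs_nonneg _
  have hV0 : 0 ≤ V := Finset.sum_nonneg fun i _ => abs_nonneg _
  have h1L : (0:ℝ) < 1 + L := by linarith
  have hpow : (0:ℝ) < (1 + L) ^ τ := Real.rpow_pos_of_pos h1L τ
  have hpow1 : (0:ℝ) < (1 + L) ^ (τ + 1) := Real.rpow_pos_of_pos h1L (τ + 1)
  -- momentum: (j:ℝ) - k = -(∑ v*ℓ)
  have hmomR : ((j:ℝ) - k) = -(∑ i, (v i : ℝ) * (ℓ i : ℝ)) := by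
    have := hmom
    have : ((∑ i, v i * ℓ i : ℤ) : ℝ) + (j:ℝ) - (k:ℝ) = 0 := by exact_mod_cast congrArg (Int.cast : ℤ → ℝ) hmom
    push_cast at this
    linarith
  -- |j - k| ≤ V * (1 + L)
  have hjk : |(j:ℝ) - (k:ℝ)| ≤ V * (1 + L) := by
    rw [hmomR, abs_neg]
    calc |∑ i, (v i : ℝ) * (ℓ i : ℝ)| ≤ ∑ i, |(v i : ℝ) * (ℓ i : ℝ)| :=
          Finset.abs_sum_le_sum_abs _ _
      _ ≤ ∑ i, |(v i : ℝ)| * (1 + L) := by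
          refine Finset.sum_le_sum fun i _ => ?_
          rw [abs_mul]
          refine mul_le_mul_of_nonneg_left ?_ (abs_nonneg _)
          have hle : |(ℓ i : ℝ)| ≤ L :=
            Finset.single_le_sum (fun i _ => abs_nonneg ((ℓ i : ℝ))) (Finset.mem_univ i)
          linarith
      _ = V * (1 + L) := by rw [← Finset.sum_mul]
  -- sqrt of the minimum
  set m : ℕ := min j k with hmdef
  have hm1 : (1:ℝ) ≤ (m:ℕ) := by
    have : 1 ≤ m := le_min hj hk
    exact_mod_cast this
  have hsm : (1:ℝ) ≤ Real.sqrt m := Real.one_le_sqrt.mpr hm1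
  have hsm0 : (0:ℝ) < Real.sqrt m := by linarith
  have hsqrt : V * (1 + L) ^ (τ + 1) / γ ≤ Real.sqrt m := by
    have h0 : 0 ≤ V * (1 + L) ^ (τ + 1) / γ := by positivity
    rw [show (V * (1 + L) ^ (τ + 1) / γ) = Real.sqrt ((V * (1 + L) ^ (τ + 1) / γ) ^ 2) from
      (Real.sqrt_sq h0).symm]
    exact Real.sqrt_le_sqrt hbig
  have hgs : V * (1 + L) ^ (τ + 1) ≤ γ * Real.sqrt m := by
    rw [div_le_iff₀ hγ] at hsqrt; linarith [hsqrt]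
  -- sqrt j + sqrt k ≥ 2 sqrt m
  have hsj : Real.sqrt m ≤ Real.sqrt j := Real.sqrt_le_sqrt (by exact_mod_cast min_le_left j k)
  have hsk : Real.sqrt m ≤ Real.sqrt k := Real.sqrt_le_sqrt (by exact_mod_cast min_le_right j k)
  -- |√j - √k| * (√j + √k) = |j - k|
  have hj0 : (0:ℝ) ≤ (j:ℝ) := by positivity
  have hk0 : (0:ℝ) ≤ (k:ℝ) := by positivity
  have hjsq : Real.sqrt j ^ 2 = (j:ℝ) := Real.sq_sqrt hj0
  have hksq : Real.sqrt k ^ 2 = (k:ℝ) := Real.sq_sqrt hk0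
  have hsum0 : (0:ℝ) < Real.sqrt j + Real.sqrt k := by linarith
  have hkey : |Real.sqrt j - Real.sqrt k| * (Real.sqrt j + Real.sqrt k) = |(j:ℝ) - (k:ℝ)| := by
    rw [← abs_of_pos hsum0, ← abs_mul]
    congr 1
    nlinarith [hjsq, hksq]
  -- |√j - √k| ≤ γ / (2 (1+L)^τ)
  have hdiff : |Real.sqrt j - Real.sqrt k| ≤ γ / (2 * (1 + L) ^ τ) := by
    rw [le_div_iff₀ (by positivity)]
    have h2m : 2 * Real.sqrt m ≤ Real.sqrt j + Real.sqrt k := by linarith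
    have h1 : |Real.sqrt j - Real.sqrt k| * (2 * Real.sqrt m) ≤ |(j:ℝ) - (k:ℝ)| := by
      rw [← hkey]
      exact mul_le_mul_of_nonneg_left h2m (abs_nonneg _)
    rw [← mul_le_mul_iff_of_pos_right hsm0]
    calc |Real.sqrt j - Real.sqrt k| * (2 * (1 + L) ^ τ) * Real.sqrt m
        = (|Real.sqrt j - Real.sqrt k| * (2 * Real.sqrt m)) * (1 + L) ^ τ := by ring
      _ ≤ |(j:ℝ) - (k:ℝ)| * (1 + L) ^ τ := mul_le_mul_of_nonneg_right h1 hpow.le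
      _ ≤ (V * (1 + L)) * (1 + L) ^ τ := mul_le_mul_of_nonneg_right hjk hpow.le
      _ = V * (1 + L) ^ (τ + 1) := by rw [Real.rpow_add h1L, Real.rpow_one]; ring
      _ ≤ γ * Real.sqrt m := hgs
  -- conclude by triangle inequality
  have htriv : |∑ i, ω i * (ℓ i : ℝ)| - |Real.sqrt j - Real.sqrt k| ≤
      |(∑ i, ω i * (ℓ i : ℝ)) + Real.sqrt j - Real.sqrt k| := by
    have := abs_sub_abs_le_abs_sub ((∑ i, ω i * (ℓ i : ℝ)) + Real.sqrt j - Real.sqrt k)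
      (-(Real.sqrt j - Real.sqrt k))
    simp only [abs_neg] at this
    have heq : (∑ i, ω i * (ℓ i : ℝ)) + Real.sqrt j - Real.sqrt k - -(Real.sqrt j - Real.sqrt k)
        = (∑ i, ω i * (ℓ i : ℝ)) + 2 * (Real.sqrt j - Real.sqrt k) := by ring
    -- simpler: |X| ≤ |X + d| + |d| with X = ω·ℓ, d = √j - √k
    clear this heq
    have h := abs_add_le ((∑ i, ω i * (ℓ i : ℝ)) + Real.sqrt j - Real.sqrt k)
      (-(Real.sqrt j - Real.sqrt k))
    rw [abs_neg] at h
    have : (∑ i, ω i * (ℓ i : ℝ)) + Real.sqrt j - Real.sqrt k + -(Real.sqrt j - Real.sqrt k)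
        = ∑ i, ω i * (ℓ i : ℝ) := by ring
    rw [this] at h
    linarith
  have hhalf : γ / ((1 + L) ^ τ) = 2 * (γ / (2 * (1 + L) ^ τ)) := by
    field_simp
  linarith [hdio, hdiff, htriv]
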